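/- arXiv:math/0210465 — 8 statements merged into one kernel-verified Lean document; each statement's English description precedes it below -/
import Mathlib

section
/- The number of one-dimensional linear subspaces ℓ of F₃⁵ with q(ℓ) = 1 is exactly 45. -/
set_option maxRecDepth 10000

def canon (v : Fin 5 → ZMod 3) : Prop := ∃ i, v i = 1 ∧ ∀ j, j < i → v j = 0

instance : DecidablePred canon := fun v => by unfold canon; infer_instance

lemma canon_or (v : Fin 5 → ZMod 3) (h : (∑ i, v i * v i) = 1) : canon v ∨ canon (-v) := by
  revert h; revert v; decide

lemma not_both (v : Fin 5 → ZMod 3) : ¬(canon v ∧ canon (-v)) := by revert v; decide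

lemma card45 : Nat.card {v : Fin 5 → ZMod 3 // (∑ i, v i * v i) = 1 ∧ canon v} = 45 := by
  rw [Nat.card_eq_fintype_card]; decide

/-- The number of one-dimensional linear subspaces `ℓ` of `𝔽₃⁵` on which the standard
quadratic form `q(x) = ∑ xᵢ²` takes the value `1` (on the nonzero vectors of `ℓ`)
is exactly `45`. -/
theorem num_q_eq_one_lines_F3_5 :
    Nat.card {ℓ : Submodule (ZMod 3) (Fin 5 → ZMod 3) //
      Module.finrank (ZMod 3) ℓ = 1 ∧
      ∀ v : Fin 5 → ZMod 3, v ∈ ℓ → v ≠ 0 → (∑ i, v i * v i) = 1} = 45 := by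
  have hcases : ∀ c : ZMod 3, c = 0 ∨ c = 1 ∨ c = 2 := by decide
  have hneg : ∀ u : Fin 5 → ZMod 3, (2 : ZMod 3) • u = -u := by
    intro u; funext i; show (2 : ZMod 3) * u i = - u i
    have : ∀ a : ZMod 3, 2 * a = -a := by decide
    exact this _
  have hcc' : ∀ d : ZMod 3, d ≠ 0 → d * d = 1 := by decide
  have hqne : ∀ v : Fin 5 → ZMod 3, (∑ i, v i * v i) = 1 → v ≠ 0 := by
    rintro v hq rfl; simp at hq
  let f : {v : Fin 5 → ZMod 3 // (∑ i, v i * v i) = 1 ∧ canon v} →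
      {ℓ : Submodule (ZMod 3) (Fin 5 → ZMod 3) //
      Module.finrank (ZMod 3) ℓ = 1 ∧
      ∀ v : Fin 5 → ZMod 3, v ∈ ℓ → v ≠ 0 → (∑ i, v i * v i) = 1} := fun x =>
    ⟨Submodule.span (ZMod 3) {x.1}, by
      constructor
      · exact finrank_span_singleton (hqne _ x.2.1)
      · intro w hw hw0
        obtain ⟨c, rfl⟩ := Submodule.mem_span_singleton.mp hw
        have hc0 : c ≠ 0 := by rintro rfl; simp at hw0
        have hcc : c * c = 1 := hcc' c hc0
        calc ∑ i, (c • x.1) i * (c • x.1) i = c * c * ∑ i, x.1 i * x.1 i := by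
              rw [Finset.mul_sum]
              exact Finset.sum_congr rfl fun i _ => by simp [smul_eq_mul]; ring
          _ = 1 := by rw [x.2.1, mul_one, hcc]⟩
  have hinj : Function.Injective f := by
    rintro ⟨v, hv⟩ ⟨w, hw⟩ h
    have hsp : Submodule.span (ZMod 3) {v} = Submodule.span (ZMod 3) {w} :=
      congrArg Subtype.val h
    have hmem : w ∈ Submodule.span (ZMod 3) {v} := by
      rw [hsp]; exact Submodule.mem_span_singleton_self w
    obtain ⟨c, hc⟩ := Submodule.mem_span_singleton.mp hmem
    rcases hcases c with rfl | rfl | rfl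
    · exact absurd hc.symm (by simpa using (hqne w hw.1))
    · exact Subtype.ext (by simpa using hc)
    · exfalso
      rw [hneg v] at hc
      exact not_both v ⟨hv.2, hc ▸ hw.2⟩
  have hsurj : Function.Surjective f := by
    rintro ⟨ℓ, h1, hq⟩
    obtain ⟨v, hv0, hv⟩ := finrank_eq_one_iff'.mp h1
    have hu0 : (v : Fin 5 → ZMod 3) ≠ 0 := by
      simpa [Submodule.coe_eq_zero] using hv0
    have hsp : ℓ = Submodule.span (ZMod 3) {(v : Fin 5 → ZMod 3)} := by
      apply le_antisymm
      · intro x hx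
        obtain ⟨c, hc⟩ := hv ⟨x, hx⟩
        have : c • (v : Fin 5 → ZMod 3) = x := congrArg Subtype.val hc
        rw [← this]
        exact Submodule.smul_mem _ _ (Submodule.mem_span_singleton_self _)
      · rw [Submodule.span_le, Set.singleton_subset_iff]; exact v.2
    have hqu : (∑ i, (v : Fin 5 → ZMod 3) i * (v : Fin 5 → ZMod 3) i) = 1 := hq _ v.2 hu0
    rcases canon_or _ hqu with hcu | hcu
    · exact ⟨⟨v, hqu, hcu⟩, Subtype.ext hsp.symm⟩
    · refine ⟨⟨-(v : Fin 5 → ZMod 3), ?_, hcu⟩, Subtype.ext ?_⟩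
      · simpa [neg_mul_neg] using hqu
      · show Submodule.span (ZMod 3) {-(v : Fin 5 → ZMod 3)} = ℓ
        rw [← Set.neg_singleton, Submodule.span_neg]; exact hsp.symm
  have := Nat.card_congr (Equiv.ofBijective f ⟨hinj, hsurj⟩)
  rw [← this, card45]
end

section
/- The number of one-dimensional linear subspaces ℓ of F₃⁵ with q(ℓ) = −1 is exactly 36. -/
set_option maxRecDepth 4000

/-- Normalization predicate: the first nonzero coordinate of `v` equals `1`. -/
def Cnorm (v : Fin 5 → ZMod 3) : Prop :=
  v 0 = 1 ∨ (v 0 = 0 ∧ (v 1 = 1 ∨ (v 1 = 0 ∧ (v 2 = 1 ∨ (v 2 = 0 ∧ (v 3 = 1 ∨ (v 3 = 0 ∧ v 4 = 1)))))))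

instance : DecidablePred Cnorm := fun v => by unfold Cnorm; infer_instance

lemma C_ne_zero : ∀ v : Fin 5 → ZMod 3, Cnorm v → v ≠ 0 := by decide
lemma C_or : ∀ v : Fin 5 → ZMod 3, v ≠ 0 → Cnorm v ∨ Cnorm (-v) := by decide
lemma C_not_neg : ∀ v : Fin 5 → ZMod 3, Cnorm v → ¬ Cnorm (-v) := by decide

def Tset : Finset (Fin 5 → ZMod 3) :=
  Finset.univ.filter (fun v => (∑ i, v i * v i) = -1 ∧ Cnorm v)

lemma Tcard : Tset.card = 36 := by decide

lemma mem_Tset {v : Fin 5 → ZMod 3} :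
    v ∈ Tset ↔ (∑ i, v i * v i) = -1 ∧ Cnorm v := by
  simp [Tset]

lemma span_neg (v : Fin 5 → ZMod 3) :
    Submodule.span (ZMod 3) {-v} = Submodule.span (ZMod 3) {v} := by
  apply le_antisymm
  · rw [Submodule.span_le, Set.singleton_subset_iff]
    exact Submodule.neg_mem _ (Submodule.mem_span_singleton_self v)
  · rw [Submodule.span_le, Set.singleton_subset_iff]
    have := Submodule.neg_mem (Submodule.span (ZMod 3) {-v}) (Submodule.mem_span_singleton_self (-v))
    rwa [neg_neg] at this

lemma zmod3_units : ∀ c : ZMod 3, c ≠ 0 → c = 1 ∨ c = -1 := by decide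

lemma q_neg (v : Fin 5 → ZMod 3) : (∑ i, (-v) i * (-v) i) = ∑ i, v i * v i := by
  simp [neg_mul_neg]

/-- The number of one-dimensional linear subspaces `ℓ` of `𝔽₃⁵` on which the standard
quadratic form `q(x) = ∑ xᵢ²` takes the value `-1` (on the nonzero vectors of `ℓ`)
is exactly `36`. -/
theorem num_q_eq_neg_one_lines_F3_5 :
    Nat.card {ℓ : Submodule (ZMod 3) (Fin 5 → ZMod 3) //
      Module.finrank (ZMod 3) ℓ = 1 ∧
      ∀ v : Fin 5 → ZMod 3, v ∈ ℓ → v ≠ 0 → (∑ i, v i * v i) = -1} = 36 := by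
  have key : Nat.card {ℓ : Submodule (ZMod 3) (Fin 5 → ZMod 3) //
      Module.finrank (ZMod 3) ℓ = 1 ∧
      ∀ v : Fin 5 → ZMod 3, v ∈ ℓ → v ≠ 0 → (∑ i, v i * v i) = -1} = Nat.card Tset := by
    apply Nat.card_eq_of_bijective ?_ ?_ |>.symm
    · -- the map from Tset to lines
      refine fun x => ⟨Submodule.span (ZMod 3) {x.1}, ?_, ?_⟩
      · exact finrank_span_singleton (C_ne_zero _ (mem_Tset.mp x.2).2)
      · intro w hw hw0
        obtain ⟨c, rfl⟩ := Submodule.mem_span_singleton.mp hw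
        have hc : c ≠ 0 := by rintro rfl; simp at hw0
        have hq := (mem_Tset.mp x.2).1
        have hc' : c = 1 ∨ c = -1 := zmod3_units c hc
        rcases hc' with rfl | rfl
        · simpa using hq
        · rw [show (-1 : ZMod 3) • x.1 = -(x.1) by simp]
          rw [q_neg]; exact hq
    · constructor
      · -- injective
        rintro ⟨v, hv⟩ ⟨w, hw⟩ h
        simp only [Subtype.mk.injEq] at h ⊢
        have hvmem : v ∈ Submodule.span (ZMod 3) {w} := by
          rw [← h]; exact Submodule.mem_span_singleton_self v
        obtain ⟨c, rfl⟩ := Submodule.mem_span_singleton.mp hvmem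
        have hCv := (mem_Tset.mp hv).2
        have hCw := (mem_Tset.mp hw).2
        have hc : c ≠ 0 := by
          rintro rfl
          exact C_ne_zero _ hCv (by simp)
        have hc' : c = 1 ∨ c = -1 := zmod3_units c hc
        rcases hc' with rfl | rfl
        · simp
        · exfalso
          apply C_not_neg w hCw
          rw [show -w = (-1 : ZMod 3) • w by simp]
          exact hCv
      · -- surjective
        rintro ⟨ℓ, hrank, hq⟩
        have hbot : ℓ ≠ ⊥ := by
          intro h
          rw [h] at hrank
          simp [finrank_bot] at hrank
        obtain ⟨v, hvℓ, hv0⟩ := Submodule.exists_mem_ne_zero_of_ne_bot hbot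
        have hspan : Submodule.span (ZMod 3) {v} = ℓ := by
          apply Submodule.eq_of_le_of_finrank_le
          · rwa [Submodule.span_le, Set.singleton_subset_iff]
          · rw [hrank, finrank_span_singleton hv0]
        have hqv : (∑ i, v i * v i) = -1 := hq v hvℓ hv0
        rcases C_or v hv0 with hC | hC
        · exact ⟨⟨v, mem_Tset.mpr ⟨hqv, hC⟩⟩, by simp [hspan]⟩
        · refine ⟨⟨-v, mem_Tset.mpr ⟨by rw [q_neg]; exact hqv, hC⟩⟩, ?_⟩
          simp only [Subtype.mk.injEq]
          rw [span_neg, hspan]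
  rw [key, Nat.card_eq_finsetCard, Tcard]
end

section
/- Let z be a line in F₃⁵ with q(z) = −1. Then the number of isotropic lines perpendicular to z (i.e. lines ℓ with q(ℓ) = 0 and ℓ ⊆ z^⊥) is exactly 10. (Geometrically: each boundary divisor of the moduli space of marked cubic surfaces meets exactly 10 cusp divisors.) -/
open Module Submodule

set_option maxRecDepth 100000 in
set_option maxHeartbeats 4000000 in
private lemma key_count20 : ∀ u : Fin 5 → ZMod 3, (∑ i, u i * u i) = -1 →
    ((Finset.univ : Finset (Fin 5 → ZMod 3)).filter
      (fun v => v ≠ 0 ∧ (∑ i, v i * v i) = 0 ∧ (∑ i, v i * u i) = 0)).card = 20 := by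
  decide

/-- If `z` is a line in `𝔽₃⁵` with `q(z) = −1` (for `q(x) = ∑ xᵢ²`), then there are
exactly `10` isotropic lines perpendicular to `z`. -/
theorem ten_isotropic_lines_perp_to_minus_one_line
    (z : Submodule (ZMod 3) (Fin 5 → ZMod 3))
    (hz : Module.finrank (ZMod 3) z = 1)
    (hqz : ∀ v : Fin 5 → ZMod 3, v ∈ z → v ≠ 0 → (∑ i, v i * v i) = -1) :
    Nat.card {ℓ : Submodule (ZMod 3) (Fin 5 → ZMod 3) //
      Module.finrank (ZMod 3) ℓ = 1 ∧
      (∀ v : Fin 5 → ZMod 3, v ∈ ℓ → v ≠ 0 → (∑ i, v i * v i) = 0) ∧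
      ∀ v : Fin 5 → ZMod 3, v ∈ ℓ → ∀ w : Fin 5 → ZMod 3, w ∈ z →
        (∑ i, v i * w i) = 0} = 10 := by
  classical
  -- a generator `u0` of `z`
  obtain ⟨u, hu0, hu⟩ := finrank_eq_one_iff'.mp hz
  set u0 : Fin 5 → ZMod 3 := (u : Fin 5 → ZMod 3) with hu0def
  have hu0ne : u0 ≠ 0 := fun h => hu0 (Subtype.ext h)
  have hqu0 : (∑ i, u0 i * u0 i) = -1 := hqz u0 u.2 hu0ne
  have hzmem : ∀ w : Fin 5 → ZMod 3, w ∈ z → ∃ c : ZMod 3, w = c • u0 := by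
    intro w hw
    obtain ⟨c, hc⟩ := hu ⟨w, hw⟩
    exact ⟨c, by simpa using (congrArg Subtype.val hc).symm⟩
  -- the set of isotropic vectors perpendicular to `u0`
  set S := {v : Fin 5 → ZMod 3 //
    v ≠ 0 ∧ (∑ i, v i * v i) = 0 ∧ (∑ i, v i * u0 i) = 0} with hSdef
  set L := {ℓ : Submodule (ZMod 3) (Fin 5 → ZMod 3) //
      Module.finrank (ZMod 3) ℓ = 1 ∧
      (∀ v : Fin 5 → ZMod 3, v ∈ ℓ → v ≠ 0 → (∑ i, v i * v i) = 0) ∧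
      ∀ v : Fin 5 → ZMod 3, v ∈ ℓ → ∀ w : Fin 5 → ZMod 3, w ∈ z →
        (∑ i, v i * w i) = 0} with hLdef
  have hScard : Nat.card S = 20 := by
    rw [Nat.card_eq_fintype_card, Fintype.card_subtype]
    exact key_count20 u0 hqu0
  -- the map sending a vector in `S` to its span
  have hspan_mem : ∀ v : S, (v : Fin 5 → ZMod 3) ∈ span (ZMod 3) {(v : Fin 5 → ZMod 3)} :=
    fun v => mem_span_singleton_self _
  have hΦprop : ∀ v : S, Module.finrank (ZMod 3) (span (ZMod 3) {(v : Fin 5 → ZMod 3)}) = 1 ∧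
      (∀ w : Fin 5 → ZMod 3, w ∈ span (ZMod 3) {(v : Fin 5 → ZMod 3)} → w ≠ 0 →
        (∑ i, w i * w i) = 0) ∧
      ∀ w : Fin 5 → ZMod 3, w ∈ span (ZMod 3) {(v : Fin 5 → ZMod 3)} →
        ∀ w' : Fin 5 → ZMod 3, w' ∈ z → (∑ i, w i * w' i) = 0 := by
    rintro ⟨v, hv0, hviso, hvperp⟩
    refine ⟨finrank_span_singleton hv0, ?_, ?_⟩
    · intro w hw _
      obtain ⟨c, rfl⟩ := mem_span_singleton.mp hw
      have : (∑ i, (c • v) i * (c • v) i) = c * c * ∑ i, v i * v i := by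
        rw [Finset.mul_sum]
        exact Finset.sum_congr rfl fun i _ => by simp [mul_comm, mul_assoc, mul_left_comm]
      rw [this, hviso, mul_zero]
    · intro w hw w' hw'
      obtain ⟨c, rfl⟩ := mem_span_singleton.mp hw
      obtain ⟨c', rfl⟩ := hzmem w' hw'
      have : (∑ i, (c • v) i * (c' • u0) i) = c * c' * ∑ i, v i * u0 i := by
        rw [Finset.mul_sum]
        exact Finset.sum_congr rfl fun i _ => by simp [mul_comm, mul_assoc, mul_left_comm]
      rw [this, hvperp, mul_zero]
  set Φ : S → L := fun v => ⟨span (ZMod 3) {(v : Fin 5 → ZMod 3)}, hΦprop v⟩ with hΦdef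
  -- finiteness
  have hfinSub : Finite (Submodule (ZMod 3) (Fin 5 → ZMod 3)) :=
    Finite.of_injective (fun s => (s : Set (Fin 5 → ZMod 3))) SetLike.coe_injective
  have hfinL : Finite L := Subtype.finite
  letI : Fintype L := Fintype.ofFinite L
  -- each fiber of `Φ` is in bijection with the nonzero vectors of the line
  have hfiber : ∀ ℓ : L, Nat.card {v : S // Φ v = ℓ} = 2 := by
    intro ℓ
    obtain ⟨ℓ', h1, h2, h3⟩ := ℓ
    have e : {v : S // Φ v = ⟨ℓ', h1, h2, h3⟩} ≃ {x : ℓ' // (x : Fin 5 → ZMod 3) ≠ 0} :=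
      { toFun := fun v => ⟨⟨(v.1 : Fin 5 → ZMod 3), by
          have := congrArg (fun t : L => t.1) v.2
          simp only [hΦdef] at this
          have h := hspan_mem v.1
          rw [this] at h
          exact h⟩, v.1.2.1⟩
        invFun := fun x => ⟨⟨(x.1 : Fin 5 → ZMod 3),
            x.2, h2 _ x.1.2 x.2, h3 _ x.1.2 u0 u.2⟩, by
          apply Subtype.ext
          show span (ZMod 3) {(x.1 : Fin 5 → ZMod 3)} = ℓ'
          refine Submodule.eq_of_le_of_finrank_eq
            (span_le.mpr (Set.singleton_subset_iff.mpr x.1.2)) ?_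
          rw [finrank_span_singleton x.2, h1]⟩
        left_inv := fun v => by ext; rfl
        right_inv := fun x => by ext; rfl }
    rw [Nat.card_congr e]
    have hcard3 : Nat.card ℓ' = 3 := by
      rw [Nat.card_eq_fintype_card, card_eq_pow_finrank (K := ZMod 3) (V := ℓ'), h1]
      simp
    have : Nat.card {x : ℓ' // (x : Fin 5 → ZMod 3) = 0} = 1 := by
      rw [Nat.card_eq_fintype_card]
      refine Fintype.card_eq_one_iff.mpr ⟨⟨0, by simp⟩, ?_⟩
      rintro ⟨x, hx⟩
      exact Subtype.ext (Subtype.ext hx)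
    have hcompl : Nat.card {x : ℓ' // (x : Fin 5 → ZMod 3) ≠ 0} =
        Nat.card ℓ' - Nat.card {x : ℓ' // (x : Fin 5 → ZMod 3) = 0} := by
      simp only [Nat.card_eq_fintype_card]
      exact Fintype.card_subtype_compl _
    rw [hcompl, hcard3, this]
  -- `Φ` is surjective, so the sigma of fibers covers `S`
  have key : Nat.card S = 2 * Nat.card L := by
    rw [Nat.card_congr (Equiv.sigmaFiberEquiv Φ).symm]
    letI : ∀ ℓ : L, Fintype {v : S // Φ v = ℓ} := fun ℓ => Fintype.ofFinite _
    rw [Nat.card_eq_fintype_card, Fintype.card_sigma]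
    have : ∀ ℓ : L, Fintype.card {v : S // Φ v = ℓ} = 2 := fun ℓ => by
      rw [← Nat.card_eq_fintype_card]; exact hfiber ℓ
    rw [Finset.sum_congr rfl (fun ℓ _ => this ℓ), Finset.sum_const, smul_eq_mul,
      Nat.card_eq_fintype_card, mul_comm]
    rfl
  rw [hScard] at key
  omega
end

section
/- Let t be a line in F₃⁵ with q(t) = 1. Then the number of isotropic lines perpendicular to t (i.e. lines ℓ with q(ℓ) = 0 and ℓ ⊆ t^⊥) is exactly 16. (Geometrically: each tritangent divisor of the moduli space of marked cubic surfaces meets exactly 16 cusp divisors.) -/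
open Submodule Finset

set_option maxRecDepth 100000 in
set_option maxHeartbeats 4000000 in
lemma count32' : ∀ v : Fin 5 → ZMod 3, (∑ i, v i * v i) = 1 →
    (Finset.univ.filter (fun w : Fin 5 → ZMod 3 =>
      w ≠ 0 ∧ (∑ i, w i * w i) = 0 ∧ (∑ i, w i * v i) = 0)).card = 32 := by
  decide

lemma rank_one_submodule' {ℓ : Submodule (ZMod 3) (Fin 5 → ZMod 3)}
    (h : Module.finrank (ZMod 3) ℓ = 1) :
    ∃ w : Fin 5 → ZMod 3, w ≠ 0 ∧ ℓ = Submodule.span (ZMod 3) {w} := by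
  rw [finrank_eq_one_iff'] at h
  obtain ⟨⟨w, hwl⟩, hw0, hall⟩ := h
  refine ⟨w, by simpa [Submodule.mk_eq_zero] using hw0, ?_⟩
  apply le_antisymm
  · intro x hx
    obtain ⟨c, hc⟩ := hall ⟨x, hx⟩
    rw [Submodule.mem_span_singleton]
    exact ⟨c, congrArg Subtype.val hc⟩
  · rw [Submodule.span_le, Set.singleton_subset_iff]; exact hwl

/-- If `t` is a line in `𝔽₃⁵` with `q(t) = 1` (for `q(x) = ∑ xᵢ²`), then there are
exactly `16` isotropic lines perpendicular to `t`. -/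
theorem sixteen_isotropic_lines_perp_to_plus_one_line
    (t : Submodule (ZMod 3) (Fin 5 → ZMod 3))
    (ht : Module.finrank (ZMod 3) t = 1)
    (hqt : ∀ v : Fin 5 → ZMod 3, v ∈ t → v ≠ 0 → (∑ i, v i * v i) = 1) :
    Nat.card {ℓ : Submodule (ZMod 3) (Fin 5 → ZMod 3) //
      Module.finrank (ZMod 3) ℓ = 1 ∧
      (∀ v : Fin 5 → ZMod 3, v ∈ ℓ → v ≠ 0 → (∑ i, v i * v i) = 0) ∧
      ∀ v : Fin 5 → ZMod 3, v ∈ ℓ → ∀ w : Fin 5 → ZMod 3, w ∈ t →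
        (∑ i, v i * w i) = 0} = 16 := by
  classical
  obtain ⟨v, hv0, htv⟩ := rank_one_submodule' ht
  have hqv : (∑ i, v i * v i) = 1 :=
    hqt v (htv ▸ Submodule.mem_span_singleton_self v) hv0
  set F : Finset (Fin 5 → ZMod 3) := Finset.univ.filter (fun w : Fin 5 → ZMod 3 =>
      w ≠ 0 ∧ (∑ i, w i * w i) = 0 ∧ (∑ i, w i * v i) = 0) with hF
  have hFcard : F.card = 32 := count32' v hqv
  have hmemF : ∀ w, w ∈ F ↔
      (w ≠ 0 ∧ (∑ i, w i * w i) = 0 ∧ (∑ i, w i * v i) = 0) := by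
    intro w; simp [hF]
  -- negation stability
  have hnegF : ∀ w ∈ F, -w ∈ F := by
    intro w hw
    rw [hmemF] at hw ⊢
    obtain ⟨h0, h1, h2⟩ := hw
    refine ⟨fun h => h0 (by simpa using congrArg Neg.neg h), ?_, ?_⟩
    · simpa using h1
    · calc (∑ i, (-w) i * v i) = -∑ i, w i * v i := by
            simp [neg_mul]
        _ = 0 := by rw [h2, neg_zero]
  set G : Finset (Submodule (ZMod 3) (Fin 5 → ZMod 3)) :=
      F.image (fun w => Submodule.span (ZMod 3) {w}) with hG
  -- the predicate
  have hPG : ∀ ℓ : Submodule (ZMod 3) (Fin 5 → ZMod 3),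
      (Module.finrank (ZMod 3) ℓ = 1 ∧
      (∀ x : Fin 5 → ZMod 3, x ∈ ℓ → x ≠ 0 → (∑ i, x i * x i) = 0) ∧
      ∀ x : Fin 5 → ZMod 3, x ∈ ℓ → ∀ w : Fin 5 → ZMod 3, w ∈ t →
        (∑ i, x i * w i) = 0) ↔ ℓ ∈ G := by
    intro ℓ
    constructor
    · rintro ⟨h1, h2, h3⟩
      obtain ⟨w, hw0, hlw⟩ := rank_one_submodule' h1
      have hwl : w ∈ ℓ := hlw ▸ Submodule.mem_span_singleton_self w
      rw [hG, Finset.mem_image]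
      exact ⟨w, (hmemF w).2 ⟨hw0, h2 w hwl hw0,
        h3 w hwl v (htv ▸ Submodule.mem_span_singleton_self v)⟩, hlw.symm⟩
    · intro hl
      rw [hG, Finset.mem_image] at hl
      obtain ⟨w, hwF, rfl⟩ := hl
      rw [hmemF] at hwF
      obtain ⟨hw0, hq, hb⟩ := hwF
      refine ⟨finrank_span_singleton hw0, ?_, ?_⟩
      · intro x hx hx0
        rw [Submodule.mem_span_singleton] at hx
        obtain ⟨c, rfl⟩ := hx
        calc (∑ i, (c • w) i * (c • w) i) = c * c * ∑ i, w i * w i := by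
              rw [Finset.mul_sum]; exact Finset.sum_congr rfl (fun i _ => by
                simp [Pi.smul_apply, smul_eq_mul]; ring)
          _ = 0 := by rw [hq, mul_zero]
      · intro x hx u hu
        rw [Submodule.mem_span_singleton] at hx
        obtain ⟨c, rfl⟩ := hx
        rw [htv, Submodule.mem_span_singleton] at hu
        obtain ⟨d, rfl⟩ := hu
        calc (∑ i, (c • w) i * (d • v) i) = c * d * ∑ i, w i * v i := by
              rw [Finset.mul_sum]; exact Finset.sum_congr rfl (fun i _ => by
                simp [Pi.smul_apply, smul_eq_mul]; ring)
          _ = 0 := by rw [hb, mul_zero]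
  -- card of G
  have hGcard : G.card = 16 := by
    have key : F.card = ∑ l ∈ G, (F.filter (fun w => Submodule.span (ZMod 3) {w} = l)).card :=
      Finset.card_eq_sum_card_image _ _
    have fiber2 : ∀ l ∈ G, (F.filter (fun w => Submodule.span (ZMod 3) {w} = l)).card = 2 := by
      intro l hl
      rw [hG, Finset.mem_image] at hl
      obtain ⟨w₀, hw₀F, rfl⟩ := hl
      have hw₀0 : w₀ ≠ 0 := ((hmemF w₀).1 hw₀F).1
      have : F.filter (fun w => Submodule.span (ZMod 3) {w} = Submodule.span (ZMod 3) {w₀})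
          = {w₀, -w₀} := by
        ext w
        simp only [Finset.mem_filter, Finset.mem_insert, Finset.mem_singleton]
        constructor
        · rintro ⟨hwF, hsp⟩
          have hw0 : w ≠ 0 := ((hmemF w).1 hwF).1
          have : w ∈ Submodule.span (ZMod 3) {w₀} :=
            hsp ▸ Submodule.mem_span_singleton_self w
          rw [Submodule.mem_span_singleton] at this
          obtain ⟨c, rfl⟩ := this
          have hc0 : c ≠ 0 := by rintro rfl; exact hw0 (zero_smul _ _)
          rcases (by decide : ∀ c : ZMod 3, c ≠ 0 → c = 1 ∨ c = 2) c hc0 with rfl | rfl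
          · left; simp
          · right
            show (2 : ZMod 3) • w₀ = -w₀
            have : (2 : ZMod 3) = -1 := by decide
            rw [this, neg_smul, one_smul]
        · rintro (rfl | rfl)
          · exact ⟨hw₀F, rfl⟩
          · refine ⟨hnegF w₀ hw₀F, ?_⟩
            have : ({-w₀} : Set (Fin 5 → ZMod 3)) = -{w₀} := by simp
            rw [this, Submodule.span_neg]
      rw [this]
      rw [Finset.card_insert_of_notMem, Finset.card_singleton]
      simp only [Finset.mem_singleton]
      intro h
      apply hw₀0
      have h2 : w₀ + w₀ = 0 := by nth_rewrite 1 [h]; exact neg_add_cancel w₀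
      have : (2 : ZMod 3) • w₀ = 0 := by
        rw [two_smul]; exact h2
      have h3 : (2 : ZMod 3) ≠ 0 := by decide
      exact (smul_eq_zero.mp this).resolve_left h3
    rw [Finset.sum_congr rfl fiber2, Finset.sum_const, smul_eq_mul, hFcard] at key
    omega
  -- conclude
  have hset : {ℓ : Submodule (ZMod 3) (Fin 5 → ZMod 3) |
      Module.finrank (ZMod 3) ℓ = 1 ∧
      (∀ x : Fin 5 → ZMod 3, x ∈ ℓ → x ≠ 0 → (∑ i, x i * x i) = 0) ∧
      ∀ x : Fin 5 → ZMod 3, x ∈ ℓ → ∀ w : Fin 5 → ZMod 3, w ∈ t →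
        (∑ i, x i * w i) = 0} = ↑G := by
    ext ℓ; simpa using hPG ℓ
  calc Nat.card {ℓ : Submodule (ZMod 3) (Fin 5 → ZMod 3) //
      Module.finrank (ZMod 3) ℓ = 1 ∧
      (∀ x : Fin 5 → ZMod 3, x ∈ ℓ → x ≠ 0 → (∑ i, x i * x i) = 0) ∧
      ∀ x : Fin 5 → ZMod 3, x ∈ ℓ → ∀ w : Fin 5 → ZMod 3, w ∈ t →
        (∑ i, x i * w i) = 0} = Set.ncard {ℓ : Submodule (ZMod 3) (Fin 5 → ZMod 3) |
      Module.finrank (ZMod 3) ℓ = 1 ∧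
      (∀ x : Fin 5 → ZMod 3, x ∈ ℓ → x ≠ 0 → (∑ i, x i * x i) = 0) ∧
      ∀ x : Fin 5 → ZMod 3, x ∈ ℓ → ∀ w : Fin 5 → ZMod 3, w ∈ t →
        (∑ i, x i * w i) = 0} := (Nat.card_coe_set_eq _)
    _ = Set.ncard (↑G : Set (Submodule (ZMod 3) (Fin 5 → ZMod 3))) := by rw [hset]
    _ = G.card := Set.ncard_coe_finset G
    _ = 16 := hGcard
end

section
/- Let z be a line in F₃⁵ with q(z) = −1. Then the number of lines w with q(w) = −1 and w ⊆ z^⊥ is exactly 15; all such w are distinct from z, since z ⊄ z^⊥. (Geometrically: each boundary divisor meets exactly 15 other boundary divisors.) -/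
/-- A vector is "normalized" if its first nonzero coordinate is `1`. -/
def Nrm (u : Fin 5 → ZMod 3) : Prop := ∃ i, u i = 1 ∧ ∀ j, j < i → u j = 0

instance : DecidablePred Nrm := fun u => by unfold Nrm; infer_instance

lemma nrm_ne_zero {u : Fin 5 → ZMod 3} (h : Nrm u) : u ≠ 0 := by
  obtain ⟨i, h1, -⟩ := h
  intro h0
  rw [h0] at h1
  simp at h1

set_option maxRecDepth 2000 in
lemma nrm_or : ∀ u : Fin 5 → ZMod 3, u ≠ 0 → Nrm u ∨ Nrm ((2 : ZMod 3) • u) := by decide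

set_option maxRecDepth 2000 in
lemma nrm_not_both : ∀ u : Fin 5 → ZMod 3, Nrm u → Nrm ((2 : ZMod 3) • u) → False := by decide

set_option maxHeartbeats 4000000 in
set_option maxRecDepth 10000 in
lemma key_count : ∀ v₀ : Fin 5 → ZMod 3, (∑ i, v₀ i * v₀ i) = -1 →
    (Finset.univ.filter fun u : Fin 5 → ZMod 3 =>
      Nrm u ∧ (∑ i, u i * u i) = -1 ∧ (∑ i, u i * v₀ i) = 0).card = 15 := by decide

lemma exists_span (w : Submodule (ZMod 3) (Fin 5 → ZMod 3))
    (hw : Module.finrank (ZMod 3) w = 1) :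
    ∃ v : Fin 5 → ZMod 3, v ≠ 0 ∧ w = Submodule.span (ZMod 3) {v} := by
  obtain ⟨v, hv0, hv⟩ := finrank_eq_one_iff'.mp hw
  refine ⟨v.1, by simpa using hv0, le_antisymm ?_ ?_⟩
  · intro x hx
    obtain ⟨c, hc⟩ := hv ⟨x, hx⟩
    have : c • v.1 = x := congrArg Subtype.val hc
    exact this ▸ Submodule.smul_mem _ _ (Submodule.subset_span rfl)
  · rw [Submodule.span_le, Set.singleton_subset_iff]
    exact v.2

lemma sum_smul_mul (c d : ZMod 3) (u x : Fin 5 → ZMod 3) :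
    (∑ i, (c • u) i * (d • x) i) = c * d * ∑ i, u i * x i := by
  rw [Finset.mul_sum]
  refine Finset.sum_congr rfl fun i _ => ?_
  simp [smul_eq_mul]
  ring

/-- If `z` is a line in `𝔽₃⁵` with `q(z) = −1` (for `q(x) = ∑ xᵢ²`), then there are
exactly `15` lines `w` with `q(w) = −1` contained in `z^⊥`; all such `w` are distinct
from `z`, since `z` is not contained in `z^⊥`. -/
theorem fifteen_minus_one_lines_perp_to_minus_one_line
    (z : Submodule (ZMod 3) (Fin 5 → ZMod 3))
    (hz : Module.finrank (ZMod 3) z = 1)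
    (hqz : ∀ v : Fin 5 → ZMod 3, v ∈ z → v ≠ 0 → (∑ i, v i * v i) = -1) :
    Nat.card {w : Submodule (ZMod 3) (Fin 5 → ZMod 3) //
      Module.finrank (ZMod 3) w = 1 ∧
      (∀ v : Fin 5 → ZMod 3, v ∈ w → v ≠ 0 → (∑ i, v i * v i) = -1) ∧
      ∀ v : Fin 5 → ZMod 3, v ∈ w → ∀ u : Fin 5 → ZMod 3, u ∈ z →
        (∑ i, v i * u i) = 0} = 15 ∧
    (¬ ∀ v : Fin 5 → ZMod 3, v ∈ z → ∀ u : Fin 5 → ZMod 3, u ∈ z →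
        (∑ i, v i * u i) = 0) ∧
    ∀ w : Submodule (ZMod 3) (Fin 5 → ZMod 3),
      Module.finrank (ZMod 3) w = 1 →
      (∀ v : Fin 5 → ZMod 3, v ∈ w → v ≠ 0 → (∑ i, v i * v i) = -1) →
      (∀ v : Fin 5 → ZMod 3, v ∈ w → ∀ u : Fin 5 → ZMod 3, u ∈ z →
        (∑ i, v i * u i) = 0) →
      w ≠ z := by
  obtain ⟨v₀, hv₀0, hzspan⟩ := exists_span z hz
  have hv₀mem : v₀ ∈ z := hzspan ▸ Submodule.mem_span_singleton_self v₀
  have hqv₀ : (∑ i, v₀ i * v₀ i) = -1 := hqz v₀ hv₀mem hv₀0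
  have hzmem : ∀ x : Fin 5 → ZMod 3, x ∈ z → ∃ d : ZMod 3, d • v₀ = x := by
    intro x hx
    rw [hzspan, Submodule.mem_span_singleton] at hx
    exact hx
  have sq_ne : ∀ c : ZMod 3, c ≠ 0 → c * c = 1 := by decide
  refine ⟨?_, ?_, ?_⟩
  · -- the count
    set P : Submodule (ZMod 3) (Fin 5 → ZMod 3) → Prop := fun w =>
      Module.finrank (ZMod 3) w = 1 ∧
      (∀ v : Fin 5 → ZMod 3, v ∈ w → v ≠ 0 → (∑ i, v i * v i) = -1) ∧
      ∀ v : Fin 5 → ZMod 3, v ∈ w → ∀ u : Fin 5 → ZMod 3, u ∈ z →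
        (∑ i, v i * u i) = 0 with hP
    set Q : (Fin 5 → ZMod 3) → Prop := fun u =>
      Nrm u ∧ (∑ i, u i * u i) = -1 ∧ (∑ i, u i * v₀ i) = 0 with hQ
    have hf : ∀ u : Fin 5 → ZMod 3, Q u → P (Submodule.span (ZMod 3) {u}) := by
      rintro u ⟨hn, hq, hb⟩
      have hu0 : u ≠ 0 := nrm_ne_zero hn
      refine ⟨finrank_span_singleton hu0, ?_, ?_⟩
      · intro v hv hvne
        obtain ⟨c, hc⟩ := Submodule.mem_span_singleton.mp hv
        have hc0 : c ≠ 0 := by rintro rfl; simp at hc; exact hvne hc.symm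
        calc (∑ i, v i * v i) = ∑ i, (c • u) i * (c • u) i := by rw [hc]
          _ = c * c * ∑ i, u i * u i := sum_smul_mul c c u u
          _ = -1 := by rw [hq, sq_ne c hc0]; ring
      · intro v hv x hx
        obtain ⟨c, hc⟩ := Submodule.mem_span_singleton.mp hv
        obtain ⟨d, hd⟩ := hzmem x hx
        calc (∑ i, v i * x i) = ∑ i, (c • u) i * (d • v₀) i := by rw [hc, hd]
          _ = c * d * ∑ i, u i * v₀ i := sum_smul_mul c d u v₀
          _ = 0 := by rw [hb, mul_zero]
    let f : {u : Fin 5 → ZMod 3 // Q u} → {w : Submodule (ZMod 3) (Fin 5 → ZMod 3) // P w} :=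
      fun u => ⟨Submodule.span (ZMod 3) {u.1}, hf u.1 u.2⟩
    have hbij : Function.Bijective f := by
      constructor
      · rintro ⟨u, hu⟩ ⟨u', hu'⟩ h
        have hsp : Submodule.span (ZMod 3) {u} = Submodule.span (ZMod 3) {u'} :=
          congrArg Subtype.val h
        have : u' ∈ Submodule.span (ZMod 3) {u} := by
          rw [hsp]; exact Submodule.mem_span_singleton_self u'
        obtain ⟨c, hc⟩ := Submodule.mem_span_singleton.mp this
        have hc0 : c ≠ 0 := by
          rintro rfl; simp at hc; exact nrm_ne_zero hu'.1 hc.symm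
        have hc12 : c = 1 ∨ c = 2 := (by decide : ∀ a : ZMod 3, a ≠ 0 → a = 1 ∨ a = 2) c hc0
        rcases hc12 with rfl | rfl
        · simp only [one_smul] at hc
          exact Subtype.ext hc
        · exact absurd (hc ▸ hu'.1) (fun h2 => nrm_not_both u hu.1 h2)
      · rintro ⟨w, hw1, hw2, hw3⟩
        obtain ⟨v, hv0, hwspan⟩ := exists_span w hw1
        have hvmem : v ∈ w := hwspan ▸ Submodule.mem_span_singleton_self v
        have hqv : (∑ i, v i * v i) = -1 := hw2 v hvmem hv0
        have hbv : (∑ i, v i * v₀ i) = 0 := hw3 v hvmem v₀ hv₀mem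
        rcases nrm_or v hv0 with hn | hn
        · exact ⟨⟨v, hn, hqv, hbv⟩, Subtype.ext hwspan.symm⟩
        · refine ⟨⟨(2 : ZMod 3) • v, hn, ?_, ?_⟩, Subtype.ext ?_⟩
          · calc (∑ i, ((2 : ZMod 3) • v) i * ((2 : ZMod 3) • v) i)
                = (2 : ZMod 3) * 2 * ∑ i, v i * v i := sum_smul_mul 2 2 v v
              _ = -1 := by rw [hqv, sq_ne 2 (by decide)]; ring
          · have : (∑ i, ((2 : ZMod 3) • v) i * ((1 : ZMod 3) • v₀) i)
                = (2 : ZMod 3) * 1 * ∑ i, v i * v₀ i := sum_smul_mul 2 1 v v₀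
            simpa [hbv] using this
          · show Submodule.span (ZMod 3) {(2 : ZMod 3) • v} = w
            rw [hwspan]
            exact Submodule.span_singleton_smul_eq (IsUnit.of_mul_eq_one (a := _) 2 (by decide)) v
    have h1 : Nat.card {u : Fin 5 → ZMod 3 // Q u}
        = Nat.card {w : Submodule (ZMod 3) (Fin 5 → ZMod 3) // P w} := Nat.card_congr
      (Equiv.ofBijective f hbij)
    rw [← h1, Nat.card_eq_fintype_card, Fintype.card_subtype]
    exact key_count v₀ hqv₀
  · -- z not isotropic
    intro H
    have := H v₀ hv₀mem v₀ hv₀mem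
    rw [hqv₀] at this
    exact absurd this (by decide)
  · -- all such w differ from z
    rintro w hw1 hw2 hw3 rfl
    have := hw3 v₀ hv₀mem v₀ hv₀mem
    rw [hqv₀] at this
    exact absurd this (by decide)
end

section
/- Let v be an isotropic line in F₃⁵ (q(v) = 0, v ≠ 0). Then the number of lines w with q(w) = −1 and w ⊆ v^⊥ is exactly 9. (Geometrically: each cusp divisor meets exactly 9 boundary divisors.) -/
open Finset Submodule Module

set_option maxHeartbeats 8000000 in
set_option maxRecDepth 20000 in
private lemma card18 : ∀ v : Fin 5 → ZMod 3, v ≠ 0 → (∑ i, v i * v i) = 0 →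
    (Finset.univ.filter (fun w : Fin 5 → ZMod 3 =>
      w ≠ 0 ∧ (∑ i, w i * w i) = -1 ∧ (∑ i, w i * v i) = 0)).card = 18 := by
  decide

private lemma sq_one {c : ZMod 3} (hc : c ≠ 0) : c * c = 1 := by revert hc; revert c; decide

private lemma zmod3_neg_self {c : ZMod 3} (h : -c = c) : c = 0 := by revert h; revert c; decide

private lemma one_or_two {c : ZMod 3} (h : c ≠ 0) : c = 1 ∨ c = 2 := by
  revert h; revert c; decide

private lemma two_mul_eq_neg (a : ZMod 3) : (2 : ZMod 3) * a = -a := by revert a; decide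

private lemma neg_ne {w : Fin 5 → ZMod 3} (hw : w ≠ 0) : -w ≠ w := by
  intro h
  apply hw
  funext i
  have := congrFun h i
  simp only [Pi.neg_apply] at this
  exact zmod3_neg_self this

/-- If `v ∈ 𝔽₃⁵` is a nonzero isotropic vector (`q(v) = 0` for `q(x) = ∑ xᵢ²`), then the
subspace `v^⊥` contains exactly `9` lines `w` with `q(w) = −1`. -/
theorem nine_minus_one_lines_in_perp_of_isotropic
    (v : Fin 5 → ZMod 3) (hv : v ≠ 0) (hqv : (∑ i, v i * v i) = 0) :
    Nat.card {ℓ : Submodule (ZMod 3) (Fin 5 → ZMod 3) //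
      Module.finrank (ZMod 3) ℓ = 1 ∧
      (∀ w : Fin 5 → ZMod 3, w ∈ ℓ → w ≠ 0 → (∑ i, w i * w i) = -1) ∧
      ∀ w : Fin 5 → ZMod 3, w ∈ ℓ → (∑ i, w i * v i) = 0} = 9 := by
  classical
  set S : Finset (Fin 5 → ZMod 3) :=
    Finset.univ.filter (fun w : Fin 5 → ZMod 3 =>
      w ≠ 0 ∧ (∑ i, w i * w i) = -1 ∧ (∑ i, w i * v i) = 0) with hSdef
  have hS : ∀ w, w ∈ S ↔ w ≠ 0 ∧ (∑ i, w i * w i) = -1 ∧ (∑ i, w i * v i) = 0 := by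
    intro w; simp [hSdef]
  have hScard : S.card = 18 := card18 v hv hqv
  set T : Finset (Submodule (ZMod 3) (Fin 5 → ZMod 3)) :=
    S.image (fun w => Submodule.span (ZMod 3) {w}) with hTdef
  -- members of span of a nonzero vector
  have hmem : ∀ (w x : Fin 5 → ZMod 3), x ∈ Submodule.span (ZMod 3) {w} →
      ∃ c : ZMod 3, x = c • w := by
    intro w x hx
    obtain ⟨c, hc⟩ := Submodule.mem_span_singleton.mp hx
    exact ⟨c, hc.symm⟩
  -- the predicate on lines is equivalent to membership in T
  have key : ∀ ℓ : Submodule (ZMod 3) (Fin 5 → ZMod 3),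
      (Module.finrank (ZMod 3) ℓ = 1 ∧
      (∀ w : Fin 5 → ZMod 3, w ∈ ℓ → w ≠ 0 → (∑ i, w i * w i) = -1) ∧
      ∀ w : Fin 5 → ZMod 3, w ∈ ℓ → (∑ i, w i * v i) = 0) ↔ ℓ ∈ T := by
    intro ℓ
    constructor
    · rintro ⟨h1, h2, h3⟩
      have hprin : ℓ.IsPrincipal := ℓ.finrank_le_one_iff_isPrincipal.mp (le_of_eq h1)
      obtain ⟨w, hw⟩ := hprin
      have hwne : w ≠ 0 := by
        rintro rfl
        rw [hw] at h1
        rw [Submodule.span_zero_singleton] at h1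
        simp [finrank_bot] at h1
      have hwmem : w ∈ ℓ := hw ▸ Submodule.mem_span_singleton_self w
      refine Finset.mem_image.mpr ⟨w, ?_, hw.symm⟩
      exact (hS w).mpr ⟨hwne, h2 w hwmem hwne, h3 w hwmem⟩
    · intro hT
      obtain ⟨w, hwS, hwℓ⟩ := Finset.mem_image.mp hT
      obtain ⟨hwne, hq, hb⟩ := (hS w).mp hwS
      subst hwℓ
      refine ⟨finrank_span_singleton hwne, ?_, ?_⟩
      · intro x hx hxne
        obtain ⟨c, rfl⟩ := hmem w x hx
        have hcne : c ≠ 0 := by rintro rfl; simp at hxne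
        have : (∑ i, (c • w) i * (c • w) i) = (c * c) * ∑ i, w i * w i := by
          rw [Finset.mul_sum]; congr 1; funext i; simp [Pi.smul_apply]; ring
        rw [this, sq_one hcne, one_mul, hq]
      · intro x hx
        obtain ⟨c, rfl⟩ := hmem w x hx
        have : (∑ i, (c • w) i * v i) = c * ∑ i, w i * v i := by
          rw [Finset.mul_sum]; congr 1; funext i; simp [Pi.smul_apply]; ring
        rw [this, hb, mul_zero]
  -- Nat.card of the subtype equals T.card
  have hcard1 : Nat.card {ℓ : Submodule (ZMod 3) (Fin 5 → ZMod 3) //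
      Module.finrank (ZMod 3) ℓ = 1 ∧
      (∀ w : Fin 5 → ZMod 3, w ∈ ℓ → w ≠ 0 → (∑ i, w i * w i) = -1) ∧
      ∀ w : Fin 5 → ZMod 3, w ∈ ℓ → (∑ i, w i * v i) = 0} = T.card := by
    rw [Nat.card_congr (Equiv.subtypeEquivRight key)]
    simp [Nat.card_eq_fintype_card, Fintype.card_coe]
  rw [hcard1]
  -- fibers of span over S have exactly two elements
  have hfiber : ∀ ℓ ∈ T,
      (S.filter (fun w => Submodule.span (ZMod 3) {w} = ℓ)).card = 2 := by
    intro ℓ hℓ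
    obtain ⟨w₀, hw₀S, hw₀ℓ⟩ := Finset.mem_image.mp hℓ
    obtain ⟨hw₀ne, hq₀, hb₀⟩ := (hS w₀).mp hw₀S
    have hset : S.filter (fun w => Submodule.span (ZMod 3) {w} = ℓ) = {w₀, -w₀} := by
      apply Finset.ext
      intro x
      simp only [Finset.mem_filter, Finset.mem_insert, Finset.mem_singleton]
      constructor
      · rintro ⟨hxS, hxℓ⟩
        obtain ⟨hxne, -, -⟩ := (hS x).mp hxS
        have hxmem : x ∈ Submodule.span (ZMod 3) {w₀} := by
          rw [hw₀ℓ, ← hxℓ]; exact Submodule.mem_span_singleton_self x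
        obtain ⟨c, rfl⟩ := hmem w₀ x hxmem
        have hcne : c ≠ 0 := by rintro rfl; simp at hxne
        rcases one_or_two hcne with rfl | rfl
        · left; simp
        · right; funext i
          simp only [Pi.smul_apply, smul_eq_mul, Pi.neg_apply]
          exact two_mul_eq_neg _
      · have hnegmem : -w₀ ∈ Submodule.span (ZMod 3) {w₀} :=
          Submodule.neg_mem _ (Submodule.mem_span_singleton_self w₀)
        have hspanneg : Submodule.span (ZMod 3) {-w₀} = Submodule.span (ZMod 3) {w₀} := by
          apply le_antisymm
          · rw [Submodule.span_le, Set.singleton_subset_iff]; exact hnegmem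
          · rw [Submodule.span_le, Set.singleton_subset_iff]
            have h5 : -(-w₀) ∈ Submodule.span (ZMod 3) ({-w₀} : Set (Fin 5 → ZMod 3)) :=
              Submodule.neg_mem _ (Submodule.mem_span_singleton_self (-w₀))
            simpa using h5
        rintro (rfl | rfl)
        · exact ⟨hw₀S, hw₀ℓ⟩
        · refine ⟨?_, by rw [hspanneg]; exact hw₀ℓ⟩
          apply (hS _).mpr
          refine ⟨neg_ne_zero.mpr hw₀ne, ?_, ?_⟩
          · rw [← hq₀]; exact Finset.sum_congr rfl fun i _ => by simp
          · have h4 : (∑ i, (-w₀) i * v i) = -(∑ i, w₀ i * v i) := by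
              simp [neg_mul, Finset.sum_neg_distrib]
            rw [h4, hb₀, neg_zero]
    rw [hset, Finset.card_insert_of_notMem (by simpa using (neg_ne hw₀ne).symm),
      Finset.card_singleton]
  have hsum := Finset.card_eq_sum_card_image (fun w => Submodule.span (ZMod 3) {w}) S
  rw [hScard, ← hTdef] at hsum
  have hsum2 : (18 : ℕ) = T.card * 2 := by
    rw [hsum]
    exact (Finset.sum_congr rfl hfiber).trans (by rw [Finset.sum_const, smul_eq_mul])
  clear_value S T
  clear hS hfiber key hcard1 hmem hsum hSdef hTdef hScard
  omega
end

section
/- Let α, β, γ, δ, t be pairwise perpendicular lines in F₃⁵ with q(α) = q(β) = q(γ) = q(δ) = −1 and q(t) = 1. Then the number of isotropic lines n (i.e. q(n) = 0) which are perpendicular to at least one element of {α, β, γ, δ, t} is exactly 24. -/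
def QC (c : Fin 5 → ZMod 3) : ZMod 3 :=
  c 4 * c 4 - (c 0 * c 0 + c 1 * c 1 + c 2 * c 2 + c 3 * c 3)

def Canon (c : Fin 5 → ZMod 3) : Prop :=
  ∃ i, c i = 1 ∧ ∀ j < i, c j = 0

instance : DecidablePred Canon := fun c => by unfold Canon; infer_instance

def S0 : Finset (Fin 5 → ZMod 3) :=
  Finset.univ.filter fun c => QC c = 0 ∧ (∃ i, c i = 0) ∧ Canon c

theorem card_S0 : S0.card = 24 := by decide

theorem exists_span_line (p : Submodule (ZMod 3) (Fin 5 → ZMod 3))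
    (hp : Module.finrank (ZMod 3) p = 1) :
    ∃ v : Fin 5 → ZMod 3, v ∈ p ∧ v ≠ 0 ∧ p = Submodule.span (ZMod 3) {v} := by
  obtain ⟨v0, hv0, hall⟩ := (finrank_eq_one_iff' (K := ZMod 3) (V := p)).mp hp
  refine ⟨v0, v0.2, fun h => hv0 (Subtype.ext h), le_antisymm ?_ ?_⟩
  · intro x hx
    obtain ⟨c, hc⟩ := hall ⟨x, hx⟩
    rw [Submodule.mem_span_singleton]
    exact ⟨c, congrArg Subtype.val hc⟩
  · rw [Submodule.span_singleton_le_iff_mem]; exact v0.2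

theorem zmod3_cases : ∀ (x : ZMod 3), x ≠ 0 → x = 1 ∨ x = 2 := by decide


/-- Let `l 0, l 1, l 2, l 3` (denoted `α, β, γ, δ`) and `l 4` (denoted `t`) be pairwise
perpendicular lines in `𝔽₃⁵` with `q(α) = q(β) = q(γ) = q(δ) = −1` and `q(t) = 1`.
Then exactly `24` isotropic lines are perpendicular to at least one of `α, β, γ, δ, t`. -/
theorem twentyfour_isotropic_lines_perp_to_cross
    (l : Fin 5 → Submodule (ZMod 3) (Fin 5 → ZMod 3))
    (hrk : ∀ i, Module.finrank (ZMod 3) (l i) = 1)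
    (hperp : ∀ i j : Fin 5, i ≠ j →
      ∀ v : Fin 5 → ZMod 3, v ∈ l i → ∀ w : Fin 5 → ZMod 3, w ∈ l j →
        (∑ k, v k * w k) = 0)
    (hqneg : ∀ i : Fin 5, i ≠ 4 →
      ∀ v : Fin 5 → ZMod 3, v ∈ l i → v ≠ 0 → (∑ k, v k * v k) = -1)
    (hqt : ∀ v : Fin 5 → ZMod 3, v ∈ l 4 → v ≠ 0 → (∑ k, v k * v k) = 1) :
    Nat.card {n : Submodule (ZMod 3) (Fin 5 → ZMod 3) //
      Module.finrank (ZMod 3) n = 1 ∧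
      (∀ v : Fin 5 → ZMod 3, v ∈ n → v ≠ 0 → (∑ k, v k * v k) = 0) ∧
      ∃ i : Fin 5, ∀ v : Fin 5 → ZMod 3, v ∈ n → ∀ w : Fin 5 → ZMod 3, w ∈ l i →
        (∑ k, v k * w k) = 0} = 24 := by
  classical
  choose v hvmem hvne hvspan using fun i => exists_span_line (l i) (hrk i)
  -- values of the quadratic form on the basis vectors
  have hqv : ∀ i, (∑ k, v i k * v i k) = if i = 4 then 1 else -1 := by
    intro i
    by_cases h : i = 4
    · subst h; simp [hqt _ (hvmem 4) (hvne 4)]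
    · simp [h, hqneg i h _ (hvmem i) (hvne i)]
  have hqvne : ∀ i, (∑ k, v i k * v i k) ≠ 0 := by
    intro i; rw [hqv]; split <;> decide
  have horth : ∀ i j, i ≠ j → (∑ k, v i k * v j k) = 0 :=
    fun i j h => hperp i j h _ (hvmem i) _ (hvmem j)
  -- bilinear expansion
  have hbil : ∀ c d : Fin 5 → ZMod 3,
      (∑ k, (∑ i, c i • v i) k * (∑ j, d j • v j) k)
        = ∑ i, c i * d i * (∑ k, v i k * v i k) := by
    intro c d
    simp only [Finset.sum_apply, Pi.smul_apply, smul_eq_mul]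
    have step : (∑ k, (∑ i, c i * v i k) * (∑ j, d j * v j k))
        = ∑ i, ∑ j, c i * d j * (∑ k, v i k * v j k) := by
      calc (∑ k, (∑ i, c i * v i k) * (∑ j, d j * v j k))
          = ∑ k, ∑ i, ∑ j, c i * d j * (v i k * v j k) := by
            refine Finset.sum_congr rfl fun k _ => ?_
            rw [Finset.sum_mul]
            refine Finset.sum_congr rfl fun i _ => ?_
            rw [Finset.mul_sum]
            exact Finset.sum_congr rfl fun j _ => by ring
        _ = ∑ i, ∑ k, ∑ j, c i * d j * (v i k * v j k) := Finset.sum_comm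
        _ = ∑ i, ∑ j, ∑ k, c i * d j * (v i k * v j k) :=
            Finset.sum_congr rfl fun i _ => Finset.sum_comm
        _ = ∑ i, ∑ j, c i * d j * (∑ k, v i k * v j k) := by
            refine Finset.sum_congr rfl fun i _ => Finset.sum_congr rfl fun j _ => ?_
            rw [Finset.mul_sum]
    rw [step]
    refine Finset.sum_congr rfl fun i _ => ?_
    rw [Finset.sum_eq_single i]
    · intro j _ hj; rw [horth i j (Ne.symm hj), mul_zero]
    · intro h; exact absurd (Finset.mem_univ i) h
  -- pairing with a basis vector
  have hwv : ∀ (c : Fin 5 → ZMod 3) (i : Fin 5),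
      (∑ k, (∑ j, c j • v j) k * v i k) = c i * (∑ k, v i k * v i k) := by
    intro c i
    have h1 : v i = ∑ j, (fun j => if j = i then (1 : ZMod 3) else 0) j • v j := by
      rw [Finset.sum_eq_single i]
      · simp
      · intro j _ hj; simp [hj]
      · intro h; exact absurd (Finset.mem_univ i) h
    calc (∑ k, (∑ j, c j • v j) k * v i k)
        = ∑ k, (∑ j, c j • v j) k *
            (∑ j, (fun j => if j = i then (1 : ZMod 3) else 0) j • v j) k := by rw [← h1]
      _ = ∑ j, c j * (if j = i then (1 : ZMod 3) else 0) * (∑ k, v j k * v j k) := hbil _ _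
      _ = c i * (∑ k, v i k * v i k) := by
          rw [Finset.sum_eq_single i]
          · simp
          · intro j _ hj; simp [hj]
          · intro h; exact absurd (Finset.mem_univ i) h
  -- linear independence
  have hli : LinearIndependent (ZMod 3) v := by
    rw [Fintype.linearIndependent_iff]
    intro g hg j
    have h0 := hwv g j
    rw [hg] at h0
    simp only [Pi.zero_apply, zero_mul, Finset.sum_const_zero] at h0
    rcases mul_eq_zero.mp h0.symm with h | h
    · exact h
    · exact absurd h (hqvne j)
  have hinj : ∀ c d : Fin 5 → ZMod 3, (∑ i, c i • v i) = (∑ i, d i • v i) → c = d := by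
    intro c d h
    funext j
    have h2 : (∑ i, (c - d) i • v i) = 0 := by
      simp only [Pi.sub_apply, sub_smul, Finset.sum_sub_distrib, h, sub_self]
    have := Fintype.linearIndependent_iff.mp hli (c - d) h2 j
    exact sub_eq_zero.mp this
  have hwne : ∀ c : Fin 5 → ZMod 3, c ≠ 0 → (∑ i, c i • v i) ≠ 0 := by
    intro c hc h
    apply hc
    funext j
    exact Fintype.linearIndependent_iff.mp hli c h j
  -- quadratic value of a combination
  have hQeq : ∀ c : Fin 5 → ZMod 3,
      (∑ k, (∑ i, c i • v i) k * (∑ i, c i • v i) k) = QC c := by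
    intro c
    rw [hbil]
    simp only [hqv]
    rw [Fin.sum_univ_five,
      if_neg (by decide : ¬(0 : Fin 5) = 4), if_neg (by decide : ¬(1 : Fin 5) = 4),
      if_neg (by decide : ¬(2 : Fin 5) = 4), if_neg (by decide : ¬(3 : Fin 5) = 4),
      if_pos rfl]
    simp only [QC]
    ring
  -- basis
  have hcard : Fintype.card (Fin 5) = Module.finrank (ZMod 3) (Fin 5 → ZMod 3) := by simp
  set B := basisOfLinearIndependentOfCardEqFinrank hli hcard with hBdef
  have hB : ∀ i, B i = v i := fun i =>
    congrFun (coe_basisOfLinearIndependentOfCardEqFinrank hli hcard) i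
  have hrepr : ∀ x : Fin 5 → ZMod 3, (∑ i, B.repr x i • v i) = x := by
    intro x
    have := B.sum_repr x
    simp only [hB] at this
    exact this
  -- the map from S0 to lines
  have hmap : ∀ c ∈ S0,
      Module.finrank (ZMod 3) (Submodule.span (ZMod 3) {∑ i, c i • v i}) = 1 ∧
      (∀ x : Fin 5 → ZMod 3, x ∈ Submodule.span (ZMod 3) {∑ i, c i • v i} → x ≠ 0 →
        (∑ k, x k * x k) = 0) ∧
      ∃ i : Fin 5, ∀ x : Fin 5 → ZMod 3, x ∈ Submodule.span (ZMod 3) {∑ i, c i • v i} →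
        ∀ w : Fin 5 → ZMod 3, w ∈ l i → (∑ k, x k * w k) = 0 := by
    intro c hc
    rw [S0, Finset.mem_filter] at hc
    obtain ⟨-, hQ0, ⟨i0, hi0⟩, ⟨j0, hj0, -⟩⟩ := hc
    have hcne : c ≠ 0 := fun h => by simp [h] at hj0
    have hwne' := hwne c hcne
    refine ⟨finrank_span_singleton hwne', ?_, i0, ?_⟩
    · intro x hx _
      obtain ⟨a, ha⟩ := Submodule.mem_span_singleton.mp hx
      subst ha
      have : (∑ k, (a • ∑ i, c i • v i) k * (a • ∑ i, c i • v i) k)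
          = a * a * ∑ k, (∑ i, c i • v i) k * (∑ i, c i • v i) k := by
        rw [Finset.mul_sum]
        exact Finset.sum_congr rfl fun k _ => by simp; ring
      rw [this, hQeq, hQ0, mul_zero]
    · intro x hx w hw
      obtain ⟨a, ha⟩ := Submodule.mem_span_singleton.mp hx
      rw [hvspan i0] at hw
      obtain ⟨b, hb⟩ := Submodule.mem_span_singleton.mp hw
      subst ha; subst hb
      have : (∑ k, (a • ∑ i, c i • v i) k * (b • v i0) k)
          = a * b * ∑ k, (∑ i, c i • v i) k * v i0 k := by
        rw [Finset.mul_sum]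
        exact Finset.sum_congr rfl fun k _ => by simp; ring
      rw [this, hwv, hi0, zero_mul, mul_zero]
  -- the bijection
  let f : {c : Fin 5 → ZMod 3 // c ∈ S0} →
      {n : Submodule (ZMod 3) (Fin 5 → ZMod 3) //
        Module.finrank (ZMod 3) n = 1 ∧
        (∀ x : Fin 5 → ZMod 3, x ∈ n → x ≠ 0 → (∑ k, x k * x k) = 0) ∧
        ∃ i : Fin 5, ∀ x : Fin 5 → ZMod 3, x ∈ n → ∀ w : Fin 5 → ZMod 3, w ∈ l i →
          (∑ k, x k * w k) = 0} :=
    fun c => ⟨Submodule.span (ZMod 3) {∑ i, c.1 i • v i}, hmap c.1 c.2⟩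
  have hfbij : Function.Bijective f := by
    constructor
    · rintro ⟨c, hc⟩ ⟨c', hc'⟩ hfe
      simp only [f, Subtype.mk.injEq] at hfe
      rw [S0, Finset.mem_filter] at hc hc'
      obtain ⟨-, -, -, hcanon⟩ := hc
      obtain ⟨-, -, -, hcanon'⟩ := hc'
      have hcne : c ≠ 0 := by
        obtain ⟨j, hj, -⟩ := hcanon; exact fun h => by simp [h] at hj
      have hcne' : c' ≠ 0 := by
        obtain ⟨j, hj, -⟩ := hcanon'; exact fun h => by simp [h] at hj
      have hmem : (∑ i, c' i • v i) ∈ Submodule.span (ZMod 3) {∑ i, c i • v i} := by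
        rw [hfe]; exact Submodule.mem_span_singleton_self _
      obtain ⟨a, ha⟩ := Submodule.mem_span_singleton.mp hmem
      have ha' : (∑ i, (a * c i) • v i) = ∑ i, c' i • v i := by
        rw [← ha, Finset.smul_sum]
        exact Finset.sum_congr rfl fun i _ => by rw [smul_smul]
      have hce : c' = fun i => a * c i := (hinj _ _ ha'.symm)
      have hane : a ≠ 0 := by
        intro h
        apply hwne c' hcne'
        rw [hce, h]; funext i; simp
      apply Subtype.ext
      show c = c'
      rcases zmod3_cases a hane with h1 | h2
      · rw [hce, h1]; funext i; simp
      · exfalso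
        rw [h2] at hce
        obtain ⟨i, hci, hltc⟩ := hcanon
        obtain ⟨i', hci', hltc'⟩ := hcanon'
        simp only [hce] at hci' hltc'
        rcases lt_trichotomy i i' with h | h | h
        · have h0 := hltc' i h
          rw [hci] at h0
          exact (by decide : ¬(2 : ZMod 3) * 1 = 0) h0
        · subst h
          rw [hci] at hci'
          exact (by decide : ¬(2 : ZMod 3) * 1 = 1) hci'
        · have h0 := hltc i' h
          rw [h0, mul_zero] at hci'
          exact zero_ne_one hci'
    · rintro ⟨n, hn1, hn2, i, hn3⟩
      obtain ⟨w0, hw0mem, hw0ne, hw0span⟩ := exists_span_line n hn1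
      set c : Fin 5 → ZMod 3 := fun j => B.repr w0 j with hcdef
      have hw0 : (∑ j, c j • v j) = w0 := hrepr w0
      have hcne : c ≠ 0 := by
        intro h
        apply hw0ne
        rw [← hw0, h]; funext j; simp
      have hQ0 : QC c = 0 := by
        rw [← hQeq, hw0]; exact hn2 w0 hw0mem hw0ne
      have hci : c i = 0 := by
        have h1 := hn3 w0 hw0mem (v i) (hvmem i)
        rw [← hw0] at h1
        rw [hwv] at h1
        rcases mul_eq_zero.mp h1 with h | h
        · exact h
        · exact absurd h (hqvne i)
      -- find the least nonzero index
      have hsne : (Finset.univ.filter fun j => c j ≠ 0).Nonempty := by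
        obtain ⟨j, hj⟩ := Function.ne_iff.mp hcne
        refine ⟨j, ?_⟩
        simp only [Finset.mem_filter, Finset.mem_univ, true_and]
        exact hj
      set i0 := (Finset.univ.filter fun j => c j ≠ 0).min' hsne with hi0def
      have hi0ne : c i0 ≠ 0 :=
        (Finset.mem_filter.mp ((Finset.univ.filter fun j => c j ≠ 0).min'_mem hsne)).2
      have hi0min : ∀ j < i0, c j = 0 := by
        intro j hj
        by_contra h
        have hjmem : j ∈ Finset.univ.filter fun j => c j ≠ 0 := by
          simp only [Finset.mem_filter, Finset.mem_univ, true_and]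
          exact h
        have := Finset.min'_le _ j hjmem
        exact absurd hj (not_lt.mpr this)
      rcases zmod3_cases (c i0) hi0ne with h1 | h2
      · refine ⟨⟨c, ?_⟩, ?_⟩
        · rw [S0, Finset.mem_filter]
          exact ⟨Finset.mem_univ c, hQ0, ⟨i, hci⟩, ⟨i0, h1, hi0min⟩⟩
        · apply Subtype.ext
          show Submodule.span (ZMod 3) {∑ j, c j • v j} = n
          rw [hw0, ← hw0span]
      · refine ⟨⟨fun j => 2 * c j, ?_⟩, ?_⟩
        · rw [S0, Finset.mem_filter]
          refine ⟨Finset.mem_univ _, ?_, ⟨i, by show 2 * c i = 0; rw [hci, mul_zero]⟩,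
            ⟨i0, by show 2 * c i0 = 1; rw [h2]; decide,
              fun j hj => by show 2 * c j = 0; rw [hi0min j hj, mul_zero]⟩⟩
          show QC (fun j => 2 * c j) = 0
          have h4 : QC (fun j => 2 * c j) = 4 * QC c := by simp only [QC]; ring
          rw [h4, hQ0, mul_zero]
        · apply Subtype.ext
          show Submodule.span (ZMod 3) {∑ j, (2 * c j) • v j} = n
          have hw2 : (∑ j, (2 * c j) • v j) = (2 : ZMod 3) • w0 := by
            rw [← hw0, Finset.smul_sum]
            exact Finset.sum_congr rfl fun j _ => by rw [smul_smul]
          rw [hw2, hw0span]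
          apply le_antisymm <;>
            rw [Submodule.span_singleton_le_iff_mem, Submodule.mem_span_singleton]
          · exact ⟨2, rfl⟩
          · exact ⟨2, by rw [smul_smul, (by decide : (2 : ZMod 3) * 2 = 1), one_smul]⟩
  rw [← Nat.card_eq_of_bijective f hfbij, Nat.card_eq_fintype_card,
    Fintype.card_coe, card_S0]
end

section
/- Consider the 12 points of P³(ℚ) represented by the following vectors in ℚ⁴: the standard basis vectors e₁, e₂, e₃, e₄ and the eight vectors (1, ε₂, ε₃, ε₄) with ε₂, ε₃, ε₄ ∈ {1, −1}. Then: (a) there are exactly 16 projective lines in P³(ℚ) containing at least three of these 12 points; (b) each of these 16 lines contains exactly three of the 12 points; and (c) each of the 12 points lies on exactly 4 of these 16 lines. -/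
namespace Twelve

def vz : Fin 12 → Fin 4 → ℤ :=
  ![![1,0,0,0], ![0,1,0,0], ![0,0,1,0], ![0,0,0,1],
    ![1,1,1,1], ![1,1,1,-1], ![1,1,-1,1], ![1,1,-1,-1],
    ![1,-1,1,1], ![1,-1,1,-1], ![1,-1,-1,1], ![1,-1,-1,-1]]

def vec (i : Fin 12) : Fin 4 → ℚ := fun j => (vz i j : ℚ)

def cpairs : List (Fin 4 × Fin 4) := [(0,1),(0,2),(0,3),(1,2),(1,3),(2,3)]

def mnr (u w : Fin 4 → ℤ) (p : Fin 4 × Fin 4) : ℤ := u p.1 * w p.2 - u p.2 * w p.1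

def okZ (u w x : Fin 4 → ℤ) (p : Fin 4 × Fin 4) : Prop :=
  mnr u w p ≠ 0 ∧ ∀ c, mnr u w p * x c = mnr x w p * u c + mnr u x p * w c

instance (u w x : Fin 4 → ℤ) (p : Fin 4 × Fin 4) : Decidable (okZ u w x p) := by
  unfold okZ; infer_instance

def collinZ (u w x : Fin 4 → ℤ) : Prop := ∃ p ∈ cpairs, okZ u w x p

instance (u w x : Fin 4 → ℤ) : Decidable (collinZ u w x) := by
  unfold collinZ; infer_instance

def indepZ (u w : Fin 4 → ℤ) : Prop := ∃ p ∈ cpairs, mnr u w p ≠ 0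

instance (u w : Fin 4 → ℤ) : Decidable (indepZ u w) := by
  unfold indepZ; infer_instance

lemma mem_span_pair_iff (u w x : Fin 4 → ℚ) (p : Fin 4 × Fin 4)
    (hd : u p.1 * w p.2 - u p.2 * w p.1 ≠ 0) :
    x ∈ Submodule.span ℚ {u, w} ↔
      ∀ c, (u p.1 * w p.2 - u p.2 * w p.1) * x c
        = (x p.1 * w p.2 - x p.2 * w p.1) * u c + (u p.1 * x p.2 - u p.2 * x p.1) * w c := by
  constructor
  · intro h c
    obtain ⟨s, t, hst⟩ := Submodule.mem_span_pair.mp h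
    subst hst
    simp only [Pi.add_apply, Pi.smul_apply, smul_eq_mul]
    ring
  · intro h
    refine Submodule.mem_span_pair.mpr
      ⟨(x p.1 * w p.2 - x p.2 * w p.1) / (u p.1 * w p.2 - u p.2 * w p.1),
       (u p.1 * x p.2 - u p.2 * x p.1) / (u p.1 * w p.2 - u p.2 * w p.1), ?_⟩
    funext c
    simp only [Pi.add_apply, Pi.smul_apply, smul_eq_mul]
    rw [div_mul_eq_mul_div, div_mul_eq_mul_div, ← add_div, div_eq_iff hd]
    linarith [h c]

lemma cast_mnr (u w : Fin 12) (p : Fin 4 × Fin 4) :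
    ((mnr (vz u) (vz w) p : ℤ) : ℚ) = vec u p.1 * vec w p.2 - vec u p.2 * vec w p.1 := by
  simp [mnr, vec]

lemma collin_iff {i j : Fin 12} (h : indepZ (vz i) (vz j)) (x : Fin 12) :
    vec x ∈ Submodule.span ℚ {vec i, vec j} ↔ collinZ (vz i) (vz j) (vz x) := by
  constructor
  · intro hx
    obtain ⟨p, hp, hd⟩ := h
    have hdq : vec i p.1 * vec j p.2 - vec i p.2 * vec j p.1 ≠ 0 := by
      rw [← cast_mnr]; exact_mod_cast hd
    have h2 := (mem_span_pair_iff (vec i) (vec j) (vec x) p hdq).mp hx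
    refine ⟨p, hp, hd, fun c => ?_⟩
    have h3 := h2 c
    simp only [vec] at h3
    unfold mnr
    exact_mod_cast h3
  · rintro ⟨p, hp, hd, hc⟩
    have hdq : vec i p.1 * vec j p.2 - vec i p.2 * vec j p.1 ≠ 0 := by
      rw [← cast_mnr]; exact_mod_cast hd
    refine (mem_span_pair_iff _ _ _ p hdq).mpr fun c => ?_
    have h3 := hc c
    unfold mnr at h3
    have h4 := congrArg (fun z : ℤ => (z : ℚ)) h3
    push_cast at h4
    simpa [vec] using h4

lemma indep_of_minor {u w : Fin 4 → ℚ} (p : Fin 4 × Fin 4)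
    (hd : u p.1 * w p.2 - u p.2 * w p.1 ≠ 0) :
    LinearIndependent ℚ ![u, w] := by
  rw [LinearIndependent.pair_iff]
  intro s t hst
  have h1 := congrFun hst p.1
  have h2 := congrFun hst p.2
  simp only [Pi.add_apply, Pi.smul_apply, smul_eq_mul, Pi.zero_apply] at h1 h2
  constructor
  · have hs : s * (u p.1 * w p.2 - u p.2 * w p.1) = 0 := by
      linear_combination w p.2 * h1 - w p.1 * h2
    exact (mul_eq_zero.mp hs).resolve_right hd
  · have ht : t * (u p.1 * w p.2 - u p.2 * w p.1) = 0 := by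
      linear_combination u p.1 * h2 - u p.2 * h1
    exact (mul_eq_zero.mp ht).resolve_right hd

lemma indep_of_indepZ {i j : Fin 12} (h : indepZ (vz i) (vz j)) :
    LinearIndependent ℚ ![vec i, vec j] := by
  obtain ⟨p, _, hd⟩ := h
  refine indep_of_minor p ?_
  rw [← cast_mnr]; exact_mod_cast hd

lemma finrank_span_pair {u w : Fin 4 → ℚ} (h : LinearIndependent ℚ ![u, w]) :
    Module.finrank ℚ (Submodule.span ℚ {u, w} : Submodule ℚ (Fin 4 → ℚ)) = 2 := by
  have h2 := finrank_span_eq_card h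
  have hr : Set.range ![u, w] = {u, w} := by
    ext y
    simp [Matrix.range_cons, Matrix.range_empty]
    tauto
  rw [hr] at h2
  simpa using h2

def tri : Fin 16 → Fin 12 × Fin 12 × Fin 12 :=
  ![(0,4,11),(0,5,10),(0,6,9),(0,7,8),
    (1,4,8),(1,5,9),(1,6,10),(1,7,11),
    (2,4,6),(2,5,7),(2,8,10),(2,9,11),
    (3,4,5),(3,6,7),(3,8,9),(3,10,11)]

def onL (x : Fin 12) (l : Fin 16) : Prop :=
  x = (tri l).1 ∨ x = (tri l).2.1 ∨ x = (tri l).2.2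

instance (x : Fin 12) (l : Fin 16) : Decidable (onL x l) := by unfold onL; infer_instance

lemma indep_all : ∀ i j : Fin 12, i ≠ j → indepZ (vz i) (vz j) := by decide

lemma tri_ne : ∀ l : Fin 16, (tri l).1 ≠ (tri l).2.1 := by decide

lemma incidence : ∀ l : Fin 16, ∀ x : Fin 12,
    collinZ (vz (tri l).1) (vz (tri l).2.1) (vz x) ↔ onL x l := by decide

lemma complete : ∀ i j k : Fin 12, i ≠ j → k ≠ i → k ≠ j →
    collinZ (vz i) (vz j) (vz k) →
    ∃ l : Fin 16, collinZ (vz i) (vz j) (vz (tri l).1) ∧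
      collinZ (vz i) (vz j) (vz (tri l).2.1) := by decide

lemma onL_inj : ∀ l l' : Fin 16, onL (tri l).1 l' → onL (tri l).2.1 l' → l = l' := by decide

lemma onL_card : ∀ i : Fin 12, (Finset.univ.filter fun l => onL i l).card = 4 := by decide

lemma vec_props : ∀ i : Fin 12, (∃ k : Fin 4, vec i = Pi.single k 1) ∨
    (vec i 0 = 1 ∧ ∀ j : Fin 4, j ≠ 0 → (vec i j = 1 ∨ vec i j = -1)) := by decide

def P (i : Fin 12) : Submodule ℚ (Fin 4 → ℚ) := Submodule.span ℚ {vec i}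

def Lm (l : Fin 16) : Submodule ℚ (Fin 4 → ℚ) :=
  Submodule.span ℚ {vec (tri l).1, vec (tri l).2.1}

lemma P_inj : Function.Injective P := by
  intro i j h
  by_contra hne
  obtain ⟨p, _, hd⟩ := indep_all i j hne
  have hmem : vec j ∈ Submodule.span ℚ {vec i} := by
    rw [show Submodule.span ℚ {vec i} = P i from rfl, h]
    exact Submodule.mem_span_singleton_self (vec j)
  obtain ⟨c, hc⟩ := Submodule.mem_span_singleton.mp hmem
  apply hd
  have h1 : vec j p.1 = c * vec i p.1 := by rw [← hc]; simp
  have h2 : vec j p.2 = c * vec i p.2 := by rw [← hc]; simp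
  have h0 : vec i p.1 * vec j p.2 - vec i p.2 * vec j p.1 = 0 := by
    rw [h1, h2]; ring
  rw [← cast_mnr] at h0
  exact_mod_cast h0

lemma mem_Lm_iff (x : Fin 12) (l : Fin 16) : vec x ∈ Lm l ↔ onL x l := by
  rw [Lm, collin_iff (indep_all _ _ (tri_ne l)) x]
  exact incidence l x

lemma P_le_Lm_iff (x : Fin 12) (l : Fin 16) : P x ≤ Lm l ↔ onL x l := by
  rw [P, Submodule.span_singleton_le_iff_mem]
  exact mem_Lm_iff x l

lemma finrank_Lm (l : Fin 16) : Module.finrank ℚ (Lm l) = 2 :=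
  finrank_span_pair (indep_of_indepZ (indep_all _ _ (tri_ne l)))

lemma Lm_inj : Function.Injective Lm := by
  intro l l' h
  have h1 : vec (tri l).1 ∈ Lm l' := by
    rw [← h]; exact Submodule.subset_span (by simp [Lm])
  have h2 : vec (tri l).2.1 ∈ Lm l' := by
    rw [← h]; exact Submodule.subset_span (by simp [Lm])
  exact onL_inj l l' ((mem_Lm_iff _ _).mp h1) ((mem_Lm_iff _ _).mp h2)

end Twelve

open Twelve in
/-- Consider the `12` points of `P³(ℚ)` given by the four standard basis vectors
`e₁,…,e₄` and the eight vectors `(1, ±1, ±1, ±1)` (points determined by the `24` short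
roots of `F₄`). There are exactly `16` projective lines containing at least three of
these points; each such line contains exactly three of them, and each of the `12`
points lies on exactly `4` of the `16` lines. -/
theorem twelve_points_sixteen_lines_configuration
    (pts : Set (Submodule ℚ (Fin 4 → ℚ)))
    (hpts : pts = {ℓ | ∃ v : Fin 4 → ℚ,
      ((∃ i : Fin 4, v = Pi.single i 1) ∨
        (v 0 = 1 ∧ ∀ j : Fin 4, j ≠ 0 → (v j = 1 ∨ v j = -1))) ∧
      ℓ = Submodule.span ℚ {v}})
    (lines : Set (Submodule ℚ (Fin 4 → ℚ)))
    (hlines : lines = {L : Submodule ℚ (Fin 4 → ℚ) | Module.finrank ℚ L = 2 ∧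
      3 ≤ ({ℓ ∈ pts | ℓ ≤ L} : Set (Submodule ℚ (Fin 4 → ℚ))).ncard}) :
    pts.ncard = 12 ∧
    lines.ncard = 16 ∧
    (∀ L ∈ lines, ({ℓ ∈ pts | ℓ ≤ L} : Set (Submodule ℚ (Fin 4 → ℚ))).ncard = 3) ∧
    (∀ ℓ ∈ pts, ({L ∈ lines | ℓ ≤ L} : Set (Submodule ℚ (Fin 4 → ℚ))).ncard = 4) := by
  -- Step 1: pts is the image of P
  have hpts' : pts = Set.range P := by
    rw [hpts]
    ext ℓ
    simp only [Set.mem_setOf_eq, Set.mem_range]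
    constructor
    · rintro ⟨v, hv | ⟨h0, hs⟩, rfl⟩
      · obtain ⟨i, rfl⟩ := hv
        refine ⟨⟨i, by omega⟩, ?_⟩
        have h1 : Pi.single i (1:ℚ) = vec ⟨i, by omega⟩ := by
          revert i; decide
        rw [P, h1]
      · rcases hs 1 (by decide) with h1 | h1 <;>
          rcases hs 2 (by decide) with h2 | h2 <;>
          rcases hs 3 (by decide) with h3 | h3
        · exact ⟨4, by rw [P, show vec 4 = ![1,1,1,1] from by decide,
            show v = ![1,1,1,1] from funext fun j => by fin_cases j <;> simp_all]⟩
        · exact ⟨5, by rw [P, show vec 5 = ![1,1,1,-1] from by decide,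
            show v = ![1,1,1,-1] from funext fun j => by fin_cases j <;> simp_all]⟩
        · exact ⟨6, by rw [P, show vec 6 = ![1,1,-1,1] from by decide,
            show v = ![1,1,-1,1] from funext fun j => by fin_cases j <;> simp_all]⟩
        · exact ⟨7, by rw [P, show vec 7 = ![1,1,-1,-1] from by decide,
            show v = ![1,1,-1,-1] from funext fun j => by fin_cases j <;> simp_all]⟩
        · exact ⟨8, by rw [P, show vec 8 = ![1,-1,1,1] from by decide,
            show v = ![1,-1,1,1] from funext fun j => by fin_cases j <;> simp_all]⟩
        · exact ⟨9, by rw [P, show vec 9 = ![1,-1,1,-1] from by decide,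
            show v = ![1,-1,1,-1] from funext fun j => by fin_cases j <;> simp_all]⟩
        · exact ⟨10, by rw [P, show vec 10 = ![1,-1,-1,1] from by decide,
            show v = ![1,-1,-1,1] from funext fun j => by fin_cases j <;> simp_all]⟩
        · exact ⟨11, by rw [P, show vec 11 = ![1,-1,-1,-1] from by decide,
            show v = ![1,-1,-1,-1] from funext fun j => by fin_cases j <;> simp_all]⟩
    · rintro ⟨i, rfl⟩
      exact ⟨vec i, vec_props i, rfl⟩
  have hPmem : ∀ x : Fin 12, P x ∈ pts := by
    intro x; rw [hpts']; exact ⟨x, rfl⟩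
  have hncard_pts : pts.ncard = 12 := by
    rw [hpts', ← Set.image_univ, Set.ncard_image_of_injective _ P_inj, Set.ncard_univ]
    simp
  -- Step 2: the point set of each Lm
  have hptset : ∀ l : Fin 16, {ℓ ∈ pts | ℓ ≤ Lm l}
      = {P (tri l).1, P (tri l).2.1, P (tri l).2.2} := by
    intro l
    ext ℓ
    simp only [Set.mem_setOf_eq, Set.mem_insert_iff, Set.mem_singleton_iff]
    constructor
    · rintro ⟨hℓ, hle⟩
      rw [hpts'] at hℓ
      obtain ⟨x, rfl⟩ := hℓ
      have hx := (P_le_Lm_iff x l).mp hle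
      rcases hx with h | h | h <;> [left; (right;left); (right;right)] <;> rw [h]
    · intro h
      rcases h with h | h | h <;> subst h <;>
        exact ⟨hPmem _, (P_le_Lm_iff _ l).mpr (by unfold onL; tauto)⟩
  have htri_ne3 : ∀ l : Fin 16, (tri l).1 ≠ (tri l).2.1 ∧ (tri l).1 ≠ (tri l).2.2 ∧
      (tri l).2.1 ≠ (tri l).2.2 := by decide
  have hptset_card : ∀ l : Fin 16, ({ℓ ∈ pts | ℓ ≤ Lm l} : Set _).ncard = 3 := by
    intro l
    rw [hptset l]
    refine Set.ncard_eq_three.mpr ⟨_, _, _, ?_, ?_, ?_, rfl⟩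
    · exact fun h => (htri_ne3 l).1 (P_inj h)
    · exact fun h => (htri_ne3 l).2.1 (P_inj h)
    · exact fun h => (htri_ne3 l).2.2 (P_inj h)
  -- Step 3: lines = range Lm
  have hLm_mem : ∀ l : Fin 16, Lm l ∈ lines := by
    intro l
    rw [hlines]
    exact ⟨finrank_Lm l, by rw [hptset_card l]⟩
  have hlines' : lines = Set.range Lm := by
    ext L
    constructor
    · intro hL
      rw [hlines] at hL
      obtain ⟨hfr, hge⟩ := hL
      obtain ⟨t, hts, htc⟩ := Set.exists_subset_card_eq hge
      obtain ⟨a, b, c, hab, hac, hbc, rfl⟩ := Set.ncard_eq_three.mp htc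
      obtain ⟨ha, hale⟩ := Set.mem_sep_iff.mp (hts (by simp : a ∈ ({a,b,c} : Set _)))
      obtain ⟨hb, hble⟩ := Set.mem_sep_iff.mp (hts (by simp : b ∈ ({a,b,c} : Set _)))
      obtain ⟨hcm, hcle⟩ := Set.mem_sep_iff.mp (hts (by simp : c ∈ ({a,b,c} : Set _)))
      rw [hpts'] at ha hb hcm
      obtain ⟨i, rfl⟩ := ha
      obtain ⟨j, rfl⟩ := hb
      obtain ⟨k, rfl⟩ := hcm
      have hij : i ≠ j := fun e => hab (by rw [e])
      have hki : k ≠ i := fun e => hac (by rw [e])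
      have hkj : k ≠ j := fun e => hbc (by rw [e])
      have hvi : vec i ∈ L := (Submodule.span_singleton_le_iff_mem _ _).mp hale
      have hvj : vec j ∈ L := (Submodule.span_singleton_le_iff_mem _ _).mp hble
      have hvk : vec k ∈ L := (Submodule.span_singleton_le_iff_mem _ _).mp hcle
      have hspan : Submodule.span ℚ {vec i, vec j} ≤ L := by
        rw [Submodule.span_le, Set.insert_subset_iff, Set.singleton_subset_iff]
        exact ⟨hvi, hvj⟩
      have hfr2 : Module.finrank ℚ (Submodule.span ℚ {vec i, vec j} : Submodule ℚ (Fin 4 → ℚ)) = 2 :=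
        finrank_span_pair (indep_of_indepZ (indep_all i j hij))
      have hLeq : Submodule.span ℚ {vec i, vec j} = L :=
        Submodule.eq_of_le_of_finrank_le hspan (by rw [hfr, hfr2])
      have hkmem : vec k ∈ Submodule.span ℚ {vec i, vec j} := by rw [hLeq]; exact hvk
      have hcz := (collin_iff (indep_all i j hij) k).mp hkmem
      obtain ⟨l, hl1, hl2⟩ := complete i j k hij hki hkj hcz
      have m1 : vec (tri l).1 ∈ L := by
        rw [← hLeq]; exact (collin_iff (indep_all i j hij) _).mpr hl1
      have m2 : vec (tri l).2.1 ∈ L := by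
        rw [← hLeq]; exact (collin_iff (indep_all i j hij) _).mpr hl2
      have hsub : Lm l ≤ L := by
        rw [Lm, Submodule.span_le, Set.insert_subset_iff, Set.singleton_subset_iff]
        exact ⟨m1, m2⟩
      exact ⟨l, Submodule.eq_of_le_of_finrank_le hsub (by rw [hfr, finrank_Lm])⟩
    · rintro ⟨l, rfl⟩
      exact hLm_mem l
  have hncard_lines : lines.ncard = 16 := by
    rw [hlines', ← Set.image_univ, Set.ncard_image_of_injective _ Lm_inj, Set.ncard_univ]
    simp
  refine ⟨hncard_pts, hncard_lines, ?_, ?_⟩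
  · intro L hL
    rw [hlines'] at hL
    obtain ⟨l, rfl⟩ := hL
    exact hptset_card l
  · intro ℓ hℓ
    rw [hpts'] at hℓ
    obtain ⟨i, rfl⟩ := hℓ
    have hset : {L ∈ lines | P i ≤ L} = Lm '' {l | onL i l} := by
      ext L
      simp only [Set.mem_setOf_eq, Set.mem_image]
      constructor
      · rintro ⟨hL, hle⟩
        rw [hlines'] at hL
        obtain ⟨l, rfl⟩ := hL
        exact ⟨l, (P_le_Lm_iff i l).mp hle, rfl⟩
      · rintro ⟨l, hl, rfl⟩
        exact ⟨by rw [hlines']; exact ⟨l, rfl⟩, (P_le_Lm_iff i l).mpr hl⟩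
    rw [hset, Set.ncard_image_of_injective _ Lm_inj]
    have : {l | onL i l} = ↑(Finset.univ.filter fun l => onL i l) := by ext; simp
    rw [this, Set.ncard_coe_finset, onL_card]
end
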